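/- arXiv:1912.04239 — 5 statements merged into one kernel-verified Lean document; each statement's English description precedes it below -/
import Mathlib

section
/- Let G be a weighted graph with distinct edge weights whose vertex set is partitioned into groups V'_1,...,V'_k. For each pair i ≤ j let E_{i,j} be the set of edges with one endpoint in V'_i and the other in V'_j, and let F_{i,j} be a minimum spanning forest of the graph (V'_i ∪ V'_j, E_{i,j}). Then every edge of the minimum spanning tree of G belongs to ⋃_{i≤j} F_{i,j}. -/
open scoped Classical

variable {V : Type*}

def IsSpanningTree (G T : SimpleGraph V) : Prop := T ≤ G ∧ T.IsTree

noncomputable def treeWeight [Fintype V] (w : Sym2 V → ℝ) (T : SimpleGraph V) : ℝ :=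
  ∑ e ∈ T.edgeSet.toFinset, w e

def IsMST [Fintype V] (G : SimpleGraph V) (w : Sym2 V → ℝ) (T : SimpleGraph V) : Prop :=
  IsSpanningTree G T ∧ ∀ T' : SimpleGraph V, IsSpanningTree G T' → treeWeight w T ≤ treeWeight w T'

/-- A spanning forest of `H`: an acyclic subgraph preserving the reachability of `H`. -/
def IsSpanningForest (H F : SimpleGraph V) : Prop :=
  F ≤ H ∧ F.IsAcyclic ∧ ∀ u v : V, H.Reachable u v → F.Reachable u v

def IsMSF [Fintype V] (H : SimpleGraph V) (w : Sym2 V → ℝ) (F : SimpleGraph V) : Prop :=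
  IsSpanningForest H F ∧
    ∀ F' : SimpleGraph V, IsSpanningForest H F' → treeWeight w F ≤ treeWeight w F'

/-- The graph of edges of `G` with one endpoint in group `i` and the other in group `j`. -/
def betweenGraph {k : ℕ} (G : SimpleGraph V) (g : V → Fin k) (i j : Fin k) : SimpleGraph V where
  Adj u v := G.Adj u v ∧ ((g u = i ∧ g v = j) ∨ (g u = j ∧ g v = i))
  symm := by constructor; intro u v ⟨h, hc⟩; exact ⟨h.symm, by tauto⟩
  loopless := by constructor; intro u ⟨h, _⟩; exact G.loopless.irrefl u h

/- ### Auxiliary lemmas -/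

private lemma reach_del_or {A : SimpleGraph V} {c d x y : V} (p : A.Walk x y) :
    (A.deleteEdges {s(c,d)}).Reachable x y ∨ (A.deleteEdges {s(c,d)}).Reachable x c ∨
      (A.deleteEdges {s(c,d)}).Reachable x d := by
  induction p with
  | nil => exact Or.inl (SimpleGraph.Reachable.refl _)
  | @cons u v y h q ih =>
    by_cases he : s(u, v) = s(c, d)
    · rw [Sym2.eq_iff] at he
      rcases he with ⟨rfl, rfl⟩ | ⟨rfl, rfl⟩
      · exact Or.inr (Or.inl (SimpleGraph.Reachable.refl _))
      · exact Or.inr (Or.inr (SimpleGraph.Reachable.refl _))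
    · have hadj : (A.deleteEdges {s(c,d)}).Adj u v := by
        simp only [SimpleGraph.deleteEdges_adj, Set.mem_singleton_iff]
        exact ⟨h, he⟩
      rcases ih with r | r | r
      · exact Or.inl (hadj.reachable.trans r)
      · exact Or.inr (Or.inl (hadj.reachable.trans r))
      · exact Or.inr (Or.inr (hadj.reachable.trans r))

private lemma reach_lift {A B : SimpleGraph V} (h : ∀ x y : V, A.Adj x y → B.Reachable x y)
    {x y : V} (r : A.Reachable x y) : B.Reachable x y := by
  obtain ⟨p⟩ := r
  induction p with
  | nil => exact SimpleGraph.Reachable.refl _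
  | cons ha q ih => exact (h _ _ ha).trans ih

private lemma acyclic_sup_edge {A : SimpleGraph V} (hA : A.IsAcyclic) {c d : V}
    (hr : ¬A.Reachable c d) : (A ⊔ SimpleGraph.fromEdgeSet {s(c,d)}).IsAcyclic := by
  intro x cyc hcyc
  by_cases he : s(c,d) ∈ cyc.edges
  · have h2 := (SimpleGraph.adj_and_reachable_delete_edges_iff_exists_cycle.mpr
      ⟨x, cyc, hcyc, he⟩).2
    apply hr
    refine h2.mono ?_
    intro a b hab
    simp only [SimpleGraph.deleteEdges_adj, SimpleGraph.sup_adj,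
      SimpleGraph.fromEdgeSet_adj, Set.mem_singleton_iff] at hab
    rcases hab with ⟨h1 | h1, h3⟩
    · exact h1
    · exact absurd h1.1 h3
  · have hsub : ∀ f ∈ cyc.edges, f ∈ A.edgeSet := by
      intro f hf
      have hf2 := cyc.edges_subset_edgeSet hf
      rw [SimpleGraph.edgeSet_sup, SimpleGraph.edgeSet_fromEdgeSet] at hf2
      rcases hf2 with h1 | h1
      · exact h1
      · exact absurd h1.1 (by rintro rfl; exact he hf)
    exact hA _ (hcyc.transfer hsub)

private lemma acyclic_mono {A B : SimpleGraph V} (h : A ≤ B) (hB : B.IsAcyclic) :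
    A.IsAcyclic := fun _ cyc hcyc => hB _ (hcyc.mapLe h)

private lemma exchange_edgeSet {A : SimpleGraph V} {e₁ e₂ : Sym2 V} (hd : ¬e₂.IsDiag) :
    (A.deleteEdges {e₁} ⊔ SimpleGraph.fromEdgeSet {e₂}).edgeSet
      = (A.edgeSet \ {e₁}) ∪ {e₂} := by
  rw [SimpleGraph.edgeSet_sup, SimpleGraph.edgeSet_deleteEdges,
    SimpleGraph.edgeSet_fromEdgeSet]
  congr 1
  ext f
  simp only [Set.mem_diff, Set.mem_singleton_iff, Set.mem_setOf_eq]
  constructor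
  · rintro ⟨h, _⟩; exact h
  · rintro rfl; exact ⟨rfl, hd⟩

private lemma sum_toFinset_eq {α : Type*} (w : α → ℝ) (s : Set α) (inst : Fintype s)
    (f : Finset α) (h : ∀ x, x ∈ s ↔ x ∈ f) :
    ∑ e ∈ @Set.toFinset _ s inst, w e = ∑ e ∈ f, w e :=
  Finset.sum_congr (by ext x; simp [Set.mem_toFinset, h x]) (fun _ _ => rfl)

private lemma weight_exchange [Fintype V] (w : Sym2 V → ℝ) {A : SimpleGraph V} {e₁ e₂ : Sym2 V}
    (h1 : e₁ ∈ A.edgeSet) (h2 : e₂ ∉ A.edgeSet) (hd : ¬e₂.IsDiag) :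
    treeWeight w (A.deleteEdges {e₁} ⊔ SimpleGraph.fromEdgeSet {e₂})
      = treeWeight w A - w e₁ + w e₂ := by
  unfold treeWeight
  rw [sum_toFinset_eq w _ _ (insert e₂ (A.edgeSet.toFinset.erase e₁)) (by
    intro f
    simp only [exchange_edgeSet hd, Set.mem_union, Set.mem_diff,
      Set.mem_singleton_iff, Finset.mem_insert, Finset.mem_erase, Set.mem_toFinset]
    tauto)]
  rw [Finset.sum_insert (by
    simp only [Finset.mem_erase, Set.mem_toFinset]
    rintro ⟨-, hc⟩
    exact h2 hc)]
  have h3 : w e₁ + ∑ x ∈ A.edgeSet.toFinset.erase e₁, w x = ∑ x ∈ A.edgeSet.toFinset, w x :=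
    Finset.add_sum_erase _ w (by simpa using h1)
  linarith

/-- every MST edge of `G` is contained in some minimum spanning forest
`F_{i,j}` of the edges between groups `V'_i` and `V'_j`. -/
theorem mst_edges_in_pairwise_msf [Fintype V] {k : ℕ}
    (G : SimpleGraph V) (w : Sym2 V → ℝ) (g : V → Fin k)
    (hG : G.Connected)
    (hinj : ∀ e ∈ G.edgeSet, ∀ e' ∈ G.edgeSet, w e = w e' → e = e')
    (F : Fin k → Fin k → SimpleGraph V)
    (hF : ∀ i j : Fin k, i ≤ j → IsMSF (betweenGraph G g i j) w (F i j))
    (T : SimpleGraph V) (hT : IsMST G w T) :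
    ∀ e ∈ T.edgeSet, ∃ i j : Fin k, i ≤ j ∧ e ∈ (F i j).edgeSet := by
  intro e he
  induction e using Sym2.ind with
  | _ u v =>
  have hTadj : T.Adj u v := he
  obtain ⟨⟨hTle, hTtree⟩, hTmin⟩ := hT
  have hGadj : G.Adj u v := hTle hTadj
  have huv : u ≠ v := hGadj.ne
  refine ⟨min (g u) (g v), max (g u) (g v), min_le_max, ?_⟩
  by_contra heF
  set i := min (g u) (g v) with hi
  set j := max (g u) (g v) with hj
  set H := betweenGraph G g i j with hH
  set F' := F i j with hF'
  have hHadj : H.Adj u v := by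
    refine ⟨hGadj, ?_⟩
    rcases le_total (g u) (g v) with h | h
    · exact Or.inl ⟨(min_eq_left h).symm, (max_eq_right h).symm⟩
    · exact Or.inr ⟨(max_eq_left h).symm, (min_eq_right h).symm⟩
  obtain ⟨⟨hFle, hFac, hFreach⟩, hFmin⟩ := hF i j min_le_max
  have hHleG : H ≤ G := fun a b hab => hab.1
  have hFleG : F' ≤ G := le_trans hFle hHleG
  obtain ⟨p0⟩ := hFreach u v hHadj.reachable
  set p : F'.Path u v := p0.toPath with hp
  -- the cut
  set S : Set V := {x | (T.deleteEdges {s(u,v)}).Reachable u x} with hS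
  have huS : u ∈ S := SimpleGraph.Reachable.refl _
  have hbridge : ¬(T.deleteEdges {s(u,v)}).Reachable u v := by
    have hbr := SimpleGraph.isAcyclic_iff_forall_adj_isBridge.mp hTtree.2 hTadj
    exact (SimpleGraph.isBridge_iff).mp hbr
  have hvS : v ∉ S := hbridge
  obtain ⟨d, hdmem, hdS, hdS'⟩ := (p : F'.Walk u v).exists_boundary_dart S huS hvS
  set a := d.fst with ha
  set b := d.snd with hb
  have habF : F'.Adj a b := d.adj
  have habG : G.Adj a b := hFleG habF
  have hab : a ≠ b := habG.ne
  have he'F : s(a,b) ∈ F'.edgeSet := habF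
  have hee' : s(u,v) ≠ s(a,b) := fun h => heF (h ▸ he'F)
  have he'T : s(a,b) ∉ T.edgeSet := by
    intro hmem
    have hadj2 : (T.deleteEdges {s(u,v)}).Adj a b := by
      simp only [SimpleGraph.deleteEdges_adj, Set.mem_singleton_iff]
      exact ⟨hmem, fun h => hee' h.symm⟩
    exact hdS' (hdS.trans hadj2.reachable)
  have hnab : ¬(T.deleteEdges {s(u,v)}).Reachable a b := fun h => hdS' (hdS.trans h)
  -- the exchanged spanning tree
  set T' := T.deleteEdges {s(u,v)} ⊔ SimpleGraph.fromEdgeSet {s(a,b)} with hT'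
  have hT'le : T' ≤ G := by
    refine sup_le (le_trans (SimpleGraph.deleteEdges_le _) hTle) ?_
    intro x y hxy
    rw [SimpleGraph.fromEdgeSet_adj, Set.mem_singleton_iff] at hxy
    rw [← SimpleGraph.mem_edgeSet, hxy.1]
    exact habG
  have hT'ac : T'.IsAcyclic :=
    acyclic_sup_edge (acyclic_mono (SimpleGraph.deleteEdges_le _) hTtree.2) hnab
  have hedge' : T'.Adj a b := Or.inr (by
    rw [SimpleGraph.fromEdgeSet_adj]; exact ⟨rfl, hab⟩)
  have hbv : (T.deleteEdges {s(u,v)}).Reachable b v := by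
    obtain ⟨q⟩ := hTtree.1 b u
    rcases reach_del_or (c := u) (d := v) q with r | r | r
    · exact absurd r.symm hdS'
    · exact absurd r.symm hdS'
    · exact r
  have huvT' : T'.Reachable u v :=
    ((hdS.mono le_sup_left).trans hedge'.reachable).trans (hbv.mono le_sup_left)
  have hT'conn : T'.Connected := by
    rw [SimpleGraph.connected_iff]
    refine ⟨?_, hG.nonempty⟩
    have key : ∀ x, T'.Reachable x u := by
      intro x
      obtain ⟨q⟩ := hTtree.1 x u
      rcases reach_del_or (c := u) (d := v) q with r | r | r
      · exact r.mono le_sup_left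
      · exact r.mono le_sup_left
      · exact (r.mono le_sup_left).trans huvT'.symm
    intro x y
    exact (key x).trans (key y).symm
  have hT'w := hTmin T' ⟨hT'le, hT'conn, hT'ac⟩
  rw [weight_exchange w he he'T (by rw [Sym2.mk_isDiag_iff]; exact hab)] at hT'w
  have hle1 : w s(u,v) ≤ w s(a,b) := by linarith
  -- the exchanged spanning forest
  have hnuv : ¬(F'.deleteEdges {s(a,b)}).Reachable u v := by
    intro hr
    obtain ⟨q0⟩ := hr
    have hsub : ∀ f ∈ (q0.toPath : (F'.deleteEdges {s(a,b)}).Walk u v).edges,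
        f ∈ F'.edgeSet := by
      intro f hf
      have := SimpleGraph.Walk.edges_subset_edgeSet _ hf
      rw [SimpleGraph.edgeSet_deleteEdges] at this
      exact this.1
    have hq : ((q0.toPath : (F'.deleteEdges {s(a,b)}).Walk u v).transfer F' hsub).IsPath :=
      (q0.toPath.2).transfer hsub
    have hequ : p = ⟨_, hq⟩ := hFac.path_unique p ⟨_, hq⟩
    have he'mem : s(a,b) ∈ (p : F'.Walk u v).edges := by
      have : s(a,b) = d.edge := rfl
      rw [this, SimpleGraph.Walk.edges]
      exact List.mem_map_of_mem hdmem
    rw [hequ] at he'mem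
    simp only [SimpleGraph.Walk.edges_transfer] at he'mem
    have := SimpleGraph.Walk.edges_subset_edgeSet _ he'mem
    rw [SimpleGraph.edgeSet_deleteEdges] at this
    exact this.2 rfl
  set F'' := F'.deleteEdges {s(a,b)} ⊔ SimpleGraph.fromEdgeSet {s(u,v)} with hF''
  have hF''le : F'' ≤ H := by
    refine sup_le (le_trans (SimpleGraph.deleteEdges_le _) hFle) ?_
    intro x y hxy
    rw [SimpleGraph.fromEdgeSet_adj, Set.mem_singleton_iff] at hxy
    rw [← SimpleGraph.mem_edgeSet, hxy.1]
    exact hHadj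
  have hF''ac : F''.IsAcyclic :=
    acyclic_sup_edge (acyclic_mono (SimpleGraph.deleteEdges_le _) hFac) hnuv
  have hedgeuv : F''.Adj u v := Or.inr (by
    rw [SimpleGraph.fromEdgeSet_adj]; exact ⟨rfl, huv⟩)
  have hreach_ab : F''.Reachable a b := by
    have hasupp : a ∈ (p : F'.Walk u v).support :=
      SimpleGraph.Walk.dart_fst_mem_support_of_mem_darts _ hdmem
    have hbsupp : b ∈ (p : F'.Walk u v).support :=
      SimpleGraph.Walk.dart_snd_mem_support_of_mem_darts _ hdmem
    have h1 : (F'.deleteEdges {s(a,b)}).Reachable u a ∨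
        (F'.deleteEdges {s(a,b)}).Reachable u b := by
      rcases reach_del_or (c := a) (d := b) ((p : F'.Walk u v).takeUntil a hasupp)
        with r | r | r
      · exact Or.inl r
      · exact Or.inl r
      · exact Or.inr r
    have h2 : (F'.deleteEdges {s(a,b)}).Reachable v a ∨
        (F'.deleteEdges {s(a,b)}).Reachable v b := by
      rcases reach_del_or (c := a) (d := b) (((p : F'.Walk u v).dropUntil b hbsupp).reverse)
        with r | r | r
      · exact Or.inr r
      · exact Or.inl r
      · exact Or.inr r
    rcases h1 with r1 | r1 <;> rcases h2 with r2 | r2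
    · exact absurd (r1.trans r2.symm) hnuv
    · exact ((r1.symm.mono le_sup_left).trans hedgeuv.reachable).trans (r2.mono le_sup_left)
    · exact ((r2.symm.mono le_sup_left).trans hedgeuv.reachable.symm).trans
        (r1.mono le_sup_left)
    · exact absurd (r1.trans r2.symm) hnuv
  have hF''reach : ∀ x y : V, H.Reachable x y → F''.Reachable x y := by
    intro x y hxy
    refine reach_lift ?_ (hFreach x y hxy)
    intro x y hxy
    by_cases hxye : s(x,y) = s(a,b)
    · rcases Sym2.eq_iff.mp hxye with ⟨rfl, rfl⟩ | ⟨rfl, rfl⟩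
      · exact hreach_ab
      · exact hreach_ab.symm
    · refine SimpleGraph.Adj.reachable (Or.inl ?_)
      simp only [SimpleGraph.deleteEdges_adj, Set.mem_singleton_iff]
      exact ⟨hxy, hxye⟩
  have hF''w := hFmin F'' ⟨hF''le, hF''ac, hF''reach⟩
  rw [weight_exchange w he'F heF (by rw [Sym2.mk_isDiag_iff]; exact huv)] at hF''w
  have hle2 : w s(a,b) ≤ w s(u,v) := by linarith
  exact hee' (hinj s(u,v) (hTle he) s(a,b) habG (le_antisymm hle1 hle2))
end

section
/- Let G be a graph on n vertices with m edges and average degree Δ_A = 2m/n. If each vertex of degree δ > Δ_A is split into ⌈δ/Δ_A⌉ vertices, each assigned at most Δ_A of its original edges and connected in a path, then the resulting graph has at most 3n vertices, each of degree at most Δ_A + 2. -/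
open scoped Classical

/-- splitting each vertex of degree `δ > Δ_A` into `⌈δ/Δ_A⌉` vertices, each
receiving at most `Δ_A` original edges and at most `2` path edges, yields a graph with at
most `3n` vertices, each of degree at most `Δ_A + 2`. -/
theorem degree_splitting_bound
    {V V' : Type*} [Fintype V] [Fintype V']
    (G : SimpleGraph V) [DecidableRel G.Adj]
    (G' : SimpleGraph V') [DecidableRel G'.Adj]
    (n m ΔA : ℕ) (hn : n = Fintype.card V) (hm : m = G.edgeFinset.card)
    (hn1 : 1 ≤ n) (hm1 : 1 ≤ m)
    (hΔ1 : 1 ≤ ΔA) (hΔA : 2 * m ≤ ΔA * n)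
    (π : V' → V)
    -- each vertex `v` is split into `max 1 ⌈degree(v)/Δ_A⌉` copies
    (hfiber : ∀ v : V,
      (Finset.univ.filter (fun x : V' => π x = v)).card
        = max 1 ((G.degree v + ΔA - 1) / ΔA))
    -- each copy is incident to at most `Δ_A` original edges and at most `2` path edges
    (orig pathd : V' → ℕ)
    (hdeg : ∀ x : V', G'.degree x = orig x + pathd x)
    (horig : ∀ x : V', orig x ≤ ΔA) (hpath : ∀ x : V', pathd x ≤ 2) :
    Fintype.card V' ≤ 3 * n ∧ ∀ x : V', G'.degree x ≤ ΔA + 2 := by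
  constructor
  · -- count vertices
    have hcard : Fintype.card V' = ∑ v : V,
        (Finset.univ.filter (fun x : V' => π x = v)).card := by
      rw [← Finset.card_univ]
      exact Finset.card_eq_sum_card_fiberwise (fun x _ => Finset.mem_univ (π x))
    have hle : ∀ v : V, max 1 ((G.degree v + ΔA - 1) / ΔA) ≤ G.degree v / ΔA + 1 := by
      intro v
      refine max_le (Nat.le_add_left 1 _) ?_
      calc (G.degree v + ΔA - 1) / ΔA ≤ (G.degree v + ΔA) / ΔA :=
            Nat.div_le_div_right (by omega)
        _ = G.degree v / ΔA + 1 := Nat.add_div_right _ (by omega)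
    have hsumdiv : ∑ v : V, G.degree v / ΔA ≤ n := by
      have h1 : ΔA * (∑ v : V, G.degree v / ΔA) ≤ ∑ v : V, G.degree v := by
        rw [Finset.mul_sum]
        exact Finset.sum_le_sum fun v _ => Nat.mul_div_le _ _
      have h2 : ∑ v : V, G.degree v = 2 * m := by
        rw [hm]; exact G.sum_degrees_eq_twice_card_edges
      have := le_trans h1 (h2 ▸ hΔA)
      exact Nat.le_of_mul_le_mul_left (by linarith [this] : ΔA * _ ≤ ΔA * n) (by omega)
    calc Fintype.card V' = ∑ v : V, max 1 ((G.degree v + ΔA - 1) / ΔA) := by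
          rw [hcard]; exact Finset.sum_congr rfl fun v _ => hfiber v
      _ ≤ ∑ v : V, (G.degree v / ΔA + 1) := Finset.sum_le_sum fun v _ => hle v
      _ = (∑ v : V, G.degree v / ΔA) + n := by
          rw [Finset.sum_add_distrib, Finset.sum_const, Finset.card_univ,
            smul_eq_mul, mul_one, hn]
      _ ≤ n + n := by omega
      _ ≤ 3 * n := by omega
  · intro x
    have := hdeg x
    have := horig x
    have := hpath x
    omega
end

section
/- Consider the following two-stage edge-selection process on a finite graph G: first, each vertex v selects one edge to a neighbor u maximizing (degree(u), ID(u)) lexicographically; second, each vertex v that has an incident edge {u,v} not selected by u in the first stage selects one such edge. Let H be the graph of all selected edges. Then every vertex of degree δ in G lies in a connected component of H of size at least δ + 1. -/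
open scoped Classical

variable {V : Type*}

/-- Lexicographic order on pairs `(degree, ID)`. -/
def lexLe (a b : ℕ × ℕ) : Prop := a.1 < b.1 ∨ (a.1 = b.1 ∧ a.2 ≤ b.2)

/-- The graph of all edges marked in the two-stage selection process: `f1 v` is the
neighbor chosen by `v` in stage one, `f2 v` the (optional) neighbor chosen in stage two. -/
def markedGraph (G : SimpleGraph V) (f1 : V → V) (f2 : V → Option V) : SimpleGraph V where
  Adj a b := G.Adj a b ∧ (f1 a = b ∨ f1 b = a ∨ f2 a = some b ∨ f2 b = some a)
  symm := ⟨by intro a b ⟨h, hc⟩; exact ⟨h.symm, by tauto⟩⟩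
  loopless := ⟨fun a h => G.loopless.irrefl a h.1⟩

/-- after the two-stage edge selection, every vertex of degree `δ` lies in a
connected component of the selected-edges graph of size at least `δ + 1`. -/
theorem reduce_components_component_size
    [Fintype V] (G : SimpleGraph V) [DecidableRel G.Adj]
    (ID : V → ℕ) (hID : Function.Injective ID)
    (f1 : V → V) (f2 : V → Option V)
    -- stage one: each non-isolated `v` marks the edge to the neighbor maximizing (degree, ID)
    (hf1 : ∀ v : V, 0 < G.degree v → G.Adj v (f1 v) ∧
      ∀ u : V, G.Adj v u → lexLe (G.degree u, ID u) (G.degree (f1 v), ID (f1 v)))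
    -- stage two: marks only unmarked incident edges...
    (hf2a : ∀ v u : V, f2 v = some u → G.Adj v u ∧ f1 u ≠ v)
    -- ...and marks one whenever one exists
    (hf2b : ∀ v : V, (∃ u : V, G.Adj v u ∧ f1 u ≠ v) → ∃ u : V, f2 v = some u) :
    ∀ v : V,
      G.degree v + 1 ≤ ((markedGraph G f1 f2).connectedComponentMk v).supp.ncard := by
  intro v
  classical
  set H := markedGraph G f1 f2 with hH
  set C := H.connectedComponentMk v with hC
  have hHadj1 : ∀ x : V, 0 < G.degree x → H.Adj x (f1 x) := fun x hx =>
    ⟨(hf1 x hx).1, Or.inl rfl⟩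
  set S : Finset V := Finset.univ.filter (fun x => H.connectedComponentMk x = C) with hS
  have hSsupp : (S : Set V) = C.supp := by
    ext x
    simp [hS, SimpleGraph.ConnectedComponent.mem_supp_iff]
  have hvS : v ∈ S := Finset.mem_filter.2 ⟨Finset.mem_univ v, hC.symm ▸ rfl⟩
  obtain ⟨m, hmS, hmax⟩ := S.exists_max_image (fun x => toLex (G.degree x, ID x)) ⟨v, hvS⟩
  have hmC : H.connectedComponentMk m = C := by
    simpa [hS] using hmS
  have hlex : ∀ a b : ℕ × ℕ, lexLe a b ↔ toLex a ≤ toLex b := by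
    intro a b
    rw [Prod.Lex.le_iff]
    rfl
  -- every neighbor of `m` points to `m` in stage one
  have hpt : ∀ u : V, G.Adj m u → f1 u = m := by
    by_contra h
    push_neg at h
    obtain ⟨u, hu, hne⟩ := h
    obtain ⟨c, hc⟩ := hf2b m ⟨u, hu, hne⟩
    obtain ⟨hmc, hfc⟩ := hf2a m c hc
    have hcC : H.connectedComponentMk c = C := by
      rw [← hmC]
      exact (SimpleGraph.ConnectedComponent.sound
        (SimpleGraph.Adj.reachable
          (show H.Adj m c from ⟨hmc, Or.inr (Or.inr (Or.inl hc))⟩))).symm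
    have hcdeg : 0 < G.degree c := (G.degree_pos_iff_exists_adj c).mpr ⟨m, hmc.symm⟩
    have hfC : H.connectedComponentMk (f1 c) = C := by
      rw [← hcC]
      exact (SimpleGraph.ConnectedComponent.sound (hHadj1 c hcdeg).reachable).symm
    have h1 : toLex (G.degree (f1 c), ID (f1 c)) ≤ toLex (G.degree m, ID m) :=
      hmax _ (by simp [hS, hfC])
    have h2 : toLex (G.degree m, ID m) ≤ toLex (G.degree (f1 c), ID (f1 c)) :=
      (hlex _ _).1 ((hf1 c hcdeg).2 m hmc.symm)
    have h3 : toLex (G.degree m, ID m) = toLex (G.degree (f1 c), ID (f1 c)) :=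
      le_antisymm h2 h1
    have h4 : (G.degree m, ID m) = (G.degree (f1 c), ID (f1 c)) :=
      congrArg ofLex h3
    exact hfc (hID (congrArg Prod.snd h4)).symm
  -- hence all neighbors of `m` lie in the component
  have hsub : insert m (G.neighborFinset m) ⊆ S := by
    intro x hx
    rcases Finset.mem_insert.1 hx with rfl | hx
    · exact hmS
    · rw [SimpleGraph.mem_neighborFinset] at hx
      have hHx : H.Adj x m := ⟨hx.symm, Or.inl (hpt x hx)⟩
      simp only [hS, Finset.mem_filter, Finset.mem_univ, true_and]
      rw [← hmC]
      exact SimpleGraph.ConnectedComponent.sound hHx.reachable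
  have hdm : G.degree v ≤ G.degree m := by
    have := hmax v hvS
    rw [Prod.Lex.le_iff] at this
    rcases this with h' | h'
    · exact le_of_lt h'
    · exact le_of_eq h'.1
  have hcard : G.degree m + 1 ≤ S.card := by
    have h5 := Finset.card_le_card hsub
    rwa [Finset.card_insert_of_notMem (by simp),
      SimpleGraph.card_neighborFinset_eq_degree] at h5
  have hncard : C.supp.ncard = S.card := by
    rw [← hSsupp, Set.ncard_coe_finset]
  omega
end

section
/- In the two-stage edge-selection process (REDUCE COMPONENTS), let u be the vertex with lexicographically maximal (degree(u), ID(u)) within its connected component of the selected-edges graph H. Then every neighbor of u in G lies in the same component of H as u. -/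
open scoped Classical

variable {V : Type*}

/-- if `u` has the lexicographically maximal `(degree, ID)` within its
component of the selected-edges graph `H`, then all neighbors of `u` in `G` lie in the
same component of `H` as `u`. -/
theorem reduce_components_max_vertex_neighbors
    [Fintype V] (G : SimpleGraph V) [DecidableRel G.Adj]
    (ID : V → ℕ) (hID : Function.Injective ID)
    (f1 : V → V) (f2 : V → Option V)
    (hf1 : ∀ v : V, 0 < G.degree v → G.Adj v (f1 v) ∧
      ∀ u : V, G.Adj v u → lexLe (G.degree u, ID u) (G.degree (f1 v), ID (f1 v)))
    (hf2a : ∀ v u : V, f2 v = some u → G.Adj v u ∧ f1 u ≠ v)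
    (hf2b : ∀ v : V, (∃ u : V, G.Adj v u ∧ f1 u ≠ v) → ∃ u : V, f2 v = some u)
    (u : V)
    -- `u` is lexicographically maximal in its component of `H`
    (hmax : ∀ x : V,
      (markedGraph G f1 f2).connectedComponentMk x = (markedGraph G f1 f2).connectedComponentMk u →
      lexLe (G.degree x, ID x) (G.degree u, ID u)) :
    ∀ w : V, G.Adj u w →
      (markedGraph G f1 f2).connectedComponentMk w
        = (markedGraph G f1 f2).connectedComponentMk u := by
  intro w hadj
  by_contra hne
  -- stage one from `w` does not pick `u`, otherwise the edge `w-u` is marked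
  have h1 : f1 w ≠ u := by
    intro h
    exact hne (SimpleGraph.ConnectedComponent.sound
      (SimpleGraph.Adj.reachable (show (markedGraph G f1 f2).Adj w u from And.intro hadj.symm (Or.inl h))))
  -- so `u` has an incident edge unmarked from the other side; stage two gives `y`
  obtain ⟨y, hy⟩ := hf2b u ⟨w, hadj, h1⟩
  obtain ⟨hadjuy, hfy⟩ := hf2a u y hy
  -- the edge `u-y` is marked, so `y` is in the component of `u`
  have hyC : (markedGraph G f1 f2).connectedComponentMk y
      = (markedGraph G f1 f2).connectedComponentMk u :=
    SimpleGraph.ConnectedComponent.sound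
      (SimpleGraph.Adj.reachable (SimpleGraph.Adj.symm (show (markedGraph G f1 f2).Adj u y from And.intro hadjuy (Or.inr (Or.inr (Or.inl hy))))))
  -- `y` has positive degree
  have hdy : 0 < G.degree y := by
    rw [G.degree_pos_iff_exists_adj]
    exact ⟨u, hadjuy.symm⟩
  obtain ⟨hadjy, hmaxy⟩ := hf1 y hdy
  -- `f1 y` is in the component of `u` as well
  have hfyC : (markedGraph G f1 f2).connectedComponentMk (f1 y)
      = (markedGraph G f1 f2).connectedComponentMk u := by
    rw [← hyC]
    exact SimpleGraph.ConnectedComponent.sound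
      (SimpleGraph.Adj.reachable (SimpleGraph.Adj.symm (show (markedGraph G f1 f2).Adj y (f1 y) from And.intro hadjy (Or.inl rfl))))
  have hle1 : lexLe (G.degree u, ID u) (G.degree (f1 y), ID (f1 y)) := hmaxy u hadjuy.symm
  have hle2 : lexLe (G.degree (f1 y), ID (f1 y)) (G.degree u, ID u) := hmax (f1 y) hfyC
  -- antisymmetry forces `f1 y = u`, contradicting `hfy`
  have hid : ID (f1 y) = ID u := by
    unfold lexLe at hle1 hle2
    simp only at hle1 hle2
    omega
  exact hfy (hID hid)
end

section
/- Let G be a weighted graph with distinct edge weights, obtained from a weighted graph G₀ by splitting vertices into paths of new 'path edges', where every path edge is strictly lighter than every edge corresponding to an edge of G₀, and the path edges within each split vertex form a tree (path) spanning the copies of that vertex. Then the minimum spanning tree of G consists of all path edges together with a set of edges whose corresponding edges in G₀ form the minimum spanning tree of G₀. -/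
open scoped Classical

variable {V V₀ : Type*}

/-- The subgraph of `G` consisting of the path edges, i.e. edges inside a fiber of `π`. -/
def pathGraph (G : SimpleGraph V) (π : V → V₀) : SimpleGraph V where
  Adj u v := G.Adj u v ∧ π u = π v
  symm := ⟨by rintro u v ⟨h, he⟩; exact ⟨h.symm, he.symm⟩⟩
  loopless := ⟨fun u h => G.loopless.irrefl u h.1⟩

open SimpleGraph

lemma reachable_of_forall_adj {K H : SimpleGraph V}
    (h : ∀ a b : V, K.Adj a b → H.Reachable a b) {a b : V} (hr : K.Reachable a b) :
    H.Reachable a b := by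
  obtain ⟨p⟩ := hr
  induction p with
  | nil => exact Reachable.refl _
  | cons h' _ ih => exact (h _ _ h').trans ih

private lemma dichot_aux {K : SimpleGraph V} (u v : V) :
    ∀ {z t : V}, K.Walk z t → (t = u ∨ t = v) →
      (K.deleteEdges {s(u,v)}).Reachable z u ∨ (K.deleteEdges {s(u,v)}).Reachable z v := by
  intro z t p
  induction p with
  | nil =>
    rintro (rfl | rfl)
    · exact Or.inl (Reachable.refl _)
    · exact Or.inr (Reachable.refl _)
  | @cons a c d h q ih =>
    intro ht
    by_cases hne : s(a, c) = s(u, v)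
    · rw [Sym2.eq_iff] at hne
      rcases hne with ⟨rfl, rfl⟩ | ⟨rfl, rfl⟩
      · exact Or.inl (Reachable.refl _)
      · exact Or.inr (Reachable.refl _)
    · have hadj : (K.deleteEdges {s(u,v)}).Adj a c := by
        simp only [deleteEdges_adj, Set.mem_singleton_iff]
        exact ⟨h, hne⟩
      rcases ih ht with h1 | h1
      · exact Or.inl (hadj.reachable.trans h1)
      · exact Or.inr (hadj.reachable.trans h1)

lemma reachable_delete_dichotomy {K : SimpleGraph V} {u v z : V}
    (hz : K.Reachable z u) :
    (K.deleteEdges {s(u,v)}).Reachable z u ∨ (K.deleteEdges {s(u,v)}).Reachable z v := by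
  obtain ⟨p⟩ := hz
  exact dichot_aux u v p (Or.inl rfl)

lemma exists_crossing_edge {K : SimpleGraph V} {A : Set V} :
    ∀ {u v : V} (p : K.Walk u v), p.IsPath → u ∈ A → v ∉ A →
    ∃ x y : V, K.Adj x y ∧ x ∈ A ∧ y ∉ A ∧ s(x,y) ∈ p.edges ∧
      (K.deleteEdges {s(x,y)}).Reachable u x ∧ (K.deleteEdges {s(x,y)}).Reachable y v := by
  intro u v p
  induction p with
  | nil => exact fun _ hu hv => absurd hu hv
  | @cons a c d h q ih =>
    intro hp hu hv
    rw [Walk.cons_isPath_iff] at hp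
    by_cases hc : c ∈ A
    · obtain ⟨x, y, hxy, hxA, hyA, hmem, h1, h2⟩ := ih hp.1 hc hv
      refine ⟨x, y, hxy, hxA, hyA, ?_, ?_, h2⟩
      · rw [Walk.edges_cons]; exact List.mem_cons_of_mem _ hmem
      have hne : s(a, c) ≠ s(x, y) := by
        intro he
        rw [← he] at hmem
        exact hp.2 (q.fst_mem_support_of_mem_edges hmem)
      have hadj : (K.deleteEdges {s(x,y)}).Adj a c := by
        simp only [deleteEdges_adj, Set.mem_singleton_iff]
        exact ⟨h, hne⟩
      exact hadj.reachable.trans h1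
    · refine ⟨a, c, h, hu, hc, by rw [Walk.edges_cons]; exact List.mem_cons_self, Reachable.refl _, ?_⟩
      have hq : ∀ e ∈ q.edges, e ∉ ({s(a,c)} : Set (Sym2 V)) := by
        intro e he hmem
        rw [Set.mem_singleton_iff] at hmem
        subst hmem
        exact hp.2 (q.fst_mem_support_of_mem_edges he)
      exact ⟨q.toDeleteEdges _ hq⟩


lemma exchange_spanning [Fintype V] {G T : SimpleGraph V} (w : Sym2 V → ℝ)
    (hT : IsSpanningTree G T) {a₁ a₂ b₁ b₂ : V}
    (ha : G.Adj a₁ a₂) (hb : T.Adj b₁ b₂) (hna : ¬ T.Adj a₁ a₂)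
    (h1 : (T.deleteEdges {s(b₁,b₂)}).Reachable a₁ b₁)
    (h2 : (T.deleteEdges {s(b₁,b₂)}).Reachable b₂ a₂) :
    ∃ T' : SimpleGraph V, IsSpanningTree G T' ∧
      treeWeight w T' = treeWeight w T + w s(a₁,a₂) - w s(b₁,b₂) := by
  set e := s(a₁,a₂) with he_def
  set f := s(b₁,b₂) with hf_def
  set D := T.deleteEdges {f} with hD_def
  set T' := D ⊔ fromEdgeSet {e} with hT'_def
  have hediag : ¬ e.IsDiag := by simp [he_def, ha.ne]
  have heT : e ∉ T.edgeSet := fun h => hna h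
  have hfT : f ∈ T.edgeSet := hb
  have hedgeset : T'.edgeSet = (T.edgeSet \ {f}) ∪ {e} := by
    rw [hT'_def, edgeSet_sup, hD_def, edgeSet_deleteEdges, edgeSet_fromEdgeSet]
    congr 1
    ext x
    simp only [Set.mem_diff, Set.mem_singleton_iff, Set.mem_setOf_eq]
    constructor
    · rintro ⟨rfl, -⟩; rfl
    · rintro rfl; exact ⟨rfl, hediag⟩
  have hDle : D ≤ T' := le_sup_left
  have heT' : T'.Adj a₁ a₂ := by
    refine Or.inr ?_
    exact (fromEdgeSet_adj _).mpr ⟨rfl, ha.ne⟩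
  -- reachability of T-edges in T'
  have hreach : ∀ x y : V, T.Adj x y → T'.Reachable x y := by
    intro x y hxy
    by_cases hs : s(x,y) = f
    · have hr : T'.Reachable b₁ b₂ :=
        ((h1.symm.mono hDle).trans heT'.reachable).trans (h2.symm.mono hDle)
      rw [hf_def, Sym2.eq_iff] at hs
      rcases hs with ⟨rfl, rfl⟩ | ⟨rfl, rfl⟩
      · exact hr
      · exact hr.symm
    · have : T'.Adj x y := hDle (by simp only [hD_def, deleteEdges_adj, Set.mem_singleton_iff]; exact ⟨hxy, hs⟩)
      exact this.reachable
  have hconn : T'.Connected := by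
    have hTconn := hT.2.isConnected
    rw [connected_iff]
    exact ⟨fun x y => reachable_of_forall_adj hreach (hTconn.preconnected x y),
      hTconn.nonempty⟩
  have hacyc : T'.IsAcyclic := by
    intro z c hc
    by_cases hce : e ∈ c.edges
    · have hreach2 : (T' \ fromEdgeSet {e}).Reachable a₁ a₂ :=
        (adj_and_reachable_delete_edges_iff_exists_cycle.mpr ⟨z, c, hc, hce⟩).2
      have hle : (T' \ fromEdgeSet {e}) ≤ D := by
        intro x y hxy
        rw [sdiff_adj] at hxy
        rcases hxy.1 with h' | h'
        · exact h'
        · exact absurd h' hxy.2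
      have hD12 : D.Reachable b₁ b₂ :=
        (h1.symm.trans (hreach2.mono hle)).trans h2.symm
      have hbridge := isAcyclic_iff_forall_adj_isBridge.mp hT.2.IsAcyclic hb
      rw [isBridge_iff] at hbridge
      exact hbridge hD12
    · have hsub : ∀ ed ∈ c.edges, ed ∈ T.edgeSet := by
        intro ed hed
        have : ed ∈ T'.edgeSet := c.edges_subset_edgeSet hed
        rw [hedgeset] at this
        rcases this with h' | h'
        · exact h'.1
        · rw [Set.mem_singleton_iff] at h'; exact absurd (h' ▸ hed) hce
      exact hT.2.IsAcyclic (c.transfer T hsub) (hc.transfer hsub)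
  refine ⟨T', ⟨sup_le ((deleteEdges_le _).trans hT.1) ?_, hconn, hacyc⟩, ?_⟩
  · intro x y hxy
    rw [fromEdgeSet_adj, Set.mem_singleton_iff] at hxy
    rcases Sym2.eq_iff.mp hxy.1 with ⟨rfl, rfl⟩ | ⟨rfl, rfl⟩
    · exact ha
    · exact ha.symm
  · clear_value e f D T'
    have htf : T'.edgeSet.toFinset = insert e (T.edgeSet.toFinset.erase f) := by
      ext x
      rw [Set.mem_toFinset, hedgeset]
      simp only [Set.mem_union, Set.mem_diff, Set.mem_singleton_iff, Finset.mem_insert,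
        Finset.mem_erase, Set.mem_toFinset]
      tauto
    rw [treeWeight, treeWeight]
    rw [htf]
    have hnotmem : e ∉ T.edgeSet.toFinset.erase f := by
      intro h'
      exact heT (Set.mem_toFinset.mp (Finset.mem_of_mem_erase h'))
    rw [Finset.sum_insert hnotmem]
    have := Finset.sum_erase_add T.edgeSet.toFinset w (Set.mem_toFinset.mpr hfT)
    linarith

lemma cut_in_mst [Fintype V] {G T : SimpleGraph V} {w : Sym2 V → ℝ} (hT : IsMST G w T)
    {A : Set V} {u v : V} (hG : G.Adj u v) (hu : u ∈ A) (hv : v ∉ A)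
    (hmin : ∀ x y : V, G.Adj x y → x ∈ A → y ∉ A → s(x,y) ≠ s(u,v) → w s(u,v) < w s(x,y)) :
    T.Adj u v := by
  by_contra hna
  obtain ⟨q⟩ := hT.1.2.isConnected.preconnected u v
  obtain ⟨x, y, hxy, hxA, hyA, -, h1, h2⟩ :=
    exists_crossing_edge q.bypass q.bypass_isPath hu hv
  have hne : s(x,y) ≠ s(u,v) := by
    intro h
    rcases Sym2.eq_iff.mp h with ⟨rfl, rfl⟩ | ⟨rfl, rfl⟩
    · exact hna hxy
    · exact hna hxy.symm
  have hlt := hmin x y (hT.1.1 hxy) hxA hyA hne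
  obtain ⟨T', hT', hw'⟩ := exchange_spanning w hT.1 hG hxy hna h1 h2
  have hle := hT.2 T' hT'
  rw [hw'] at hle
  linarith

lemma mst_cut_min [Fintype V] {G T : SimpleGraph V} {w : Sym2 V → ℝ} (hT : IsMST G w T)
    {u v x y : V} (he : T.Adj u v) (hf : G.Adj x y)
    (hx : (T.deleteEdges {s(u,v)}).Reachable u x)
    (hy : ¬ (T.deleteEdges {s(u,v)}).Reachable u y)
    (hne : s(x,y) ≠ s(u,v)) :
    w s(u,v) ≤ w s(x,y) := by
  by_contra hlt
  push_neg at hlt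
  have hnxy : ¬ T.Adj x y := by
    intro h
    apply hy
    refine hx.trans (Adj.reachable ?_)
    rw [deleteEdges_adj]
    exact ⟨h, by simpa using hne⟩
  have hyv : (T.deleteEdges {s(u,v)}).Reachable y v := by
    rcases reachable_delete_dichotomy (v := v) (hT.1.2.isConnected.preconnected y u) with h' | h'
    · exact absurd h'.symm hy
    · exact h'
  obtain ⟨T', hT', hw'⟩ := exchange_spanning w hT.1 hf he hnxy hx.symm hyv.symm
  have hle := hT.2 T' hT'
  rw [hw'] at hle
  linarith


/-- if `G` is obtained from `G₀` by splitting vertices into paths of path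
edges, all strictly lighter than every edge of `G₀`, then the MST of `G` consists of all
path edges together with the edges corresponding to the MST of `G₀`. -/
theorem mst_of_split_graph [Fintype V] [Fintype V₀]
    (G₀ : SimpleGraph V₀) (w₀ : Sym2 V₀ → ℝ) (G : SimpleGraph V) (w : Sym2 V → ℝ)
    (π : V → V₀)
    (hG₀ : G₀.Connected)
    (hw₀inj : ∀ e ∈ G₀.edgeSet, ∀ e' ∈ G₀.edgeSet, w₀ e = w₀ e' → e = e')
    (hwinj : ∀ e ∈ G.edgeSet, ∀ e' ∈ G.edgeSet, w e = w e' → e = e')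
    -- every edge of `G` is a path edge or corresponds to an edge of `G₀`
    (hadj : ∀ u v : V, G.Adj u v → π u = π v ∨ G₀.Adj (π u) (π v))
    -- the path edges within each fiber form a tree spanning the fiber
    (hacyc : (pathGraph G π).IsAcyclic)
    (hspan : ∀ u v : V, π u = π v → (pathGraph G π).Reachable u v)
    -- non-path edges inherit the weight of the corresponding edge of `G₀`
    (hw : ∀ u v : V, G.Adj u v → π u ≠ π v → w s(u, v) = w₀ s(π u, π v))
    -- every path edge is strictly lighter than every edge of `G₀`
    (hlight : ∀ u v : V, G.Adj u v → π u = π v →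
      ∀ a b : V₀, G₀.Adj a b → w s(u, v) < w₀ s(a, b))
    -- the correspondence between non-path edges of `G` and edges of `G₀` is bijective
    (hcorr_inj : ∀ u v a b : V, G.Adj u v → G.Adj a b → π u ≠ π v →
      s(π u, π v) = s(π a, π b) → s(u, v) = s(a, b))
    (hcorr_surj : ∀ a b : V₀, G₀.Adj a b → ∃ u v : V, G.Adj u v ∧ π u = a ∧ π v = b) :
    ∀ T : SimpleGraph V, ∀ T₀ : SimpleGraph V₀,
      IsMST G w T → IsMST G₀ w₀ T₀ →
      (∀ u v : V, G.Adj u v → π u = π v → T.Adj u v) ∧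
      (∀ u v : V, G.Adj u v → π u ≠ π v → (T.Adj u v ↔ T₀.Adj (π u) (π v))) := by
  intro T T₀ hT hT₀
  -- Part 1 : every path edge is in T
  have part1 : ∀ u v : V, G.Adj u v → π u = π v → T.Adj u v := by
    intro u v huv hπ
    have hPadj : (pathGraph G π).Adj u v := ⟨huv, hπ⟩
    have hbridge := isAcyclic_iff_forall_adj_isBridge.mp hacyc hPadj
    rw [isBridge_iff] at hbridge
    set A : Set V := {z | ((pathGraph G π).deleteEdges {s(u,v)}).Reachable u z} with hA
    have hu : u ∈ A := Reachable.refl _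
    have hv : v ∉ A := hbridge
    refine cut_in_mst hT huv hu hv ?_
    intro x y hxy hxA hyA hne
    rcases hadj x y hxy with hp | h0
    · exfalso
      apply hyA
      refine hxA.trans (Adj.reachable ?_)
      rw [deleteEdges_adj]
      exact ⟨⟨hxy, hp⟩, by simpa using hne⟩
    · rw [hw x y hxy h0.ne]
      exact hlight u v huv hπ _ _ h0
  refine ⟨part1, ?_⟩
  intro u v huv hne
  constructor
  · -- forward : T.Adj u v → T₀.Adj (π u) (π v)
    intro huvT
    set A : Set V := {z | (T.deleteEdges {s(u,v)}).Reachable u z} with hA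
    have hsat : ∀ x x' : V, x ∈ A → π x' = π x → x' ∈ A := by
      intro x x' hx hπx
      refine hx.trans (reachable_of_forall_adj ?_ (hspan x x' hπx.symm))
      intro a b hab
      have hTab : T.Adj a b := part1 a b hab.1 hab.2
      have hne' : s(a,b) ≠ s(u,v) := by
        intro h
        rcases Sym2.eq_iff.mp h with ⟨rfl, rfl⟩ | ⟨rfl, rfl⟩
        · exact hne hab.2
        · exact hne hab.2.symm
      refine Adj.reachable ?_
      rw [deleteEdges_adj]
      exact ⟨hTab, by simpa using hne'⟩
    have hbridge := isAcyclic_iff_forall_adj_isBridge.mp hT.1.2.IsAcyclic huvT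
    rw [isBridge_iff] at hbridge
    have huA : u ∈ A := Reachable.refl _
    have hvA : v ∉ A := hbridge
    have h0 : G₀.Adj (π u) (π v) := (hadj u v huv).resolve_left hne
    have hbA₀ : π v ∉ π '' A := by
      rintro ⟨x, hxA, hπ⟩
      exact hvA (hsat x v hxA hπ.symm)
    refine cut_in_mst (A := π '' A) hT₀ h0 ⟨u, huA, rfl⟩ hbA₀ ?_
    intro c d hcd hcA₀ hdA₀ hne0
    obtain ⟨x, y, hxy, hπx, hπy⟩ := hcorr_surj c d hcd
    obtain ⟨x₀, hx₀A, hπx₀⟩ := hcA₀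
    have hxA : x ∈ A := hsat x₀ x hx₀A (by rw [hπx, hπx₀])
    have hyA : y ∉ A := fun h => hdA₀ ⟨y, h, hπy⟩
    have hnexy : s(x,y) ≠ s(u,v) := by
      intro h
      apply hne0
      rcases Sym2.eq_iff.mp h with ⟨rfl, rfl⟩ | ⟨rfl, rfl⟩
      · rw [← hπx, ← hπy]
      · rw [← hπx, ← hπy, Sym2.eq_swap]
    have hle := mst_cut_min hT huvT hxy hxA hyA hnexy
    rw [hw u v huv hne, hw x y hxy (by rw [hπx, hπy]; exact hcd.ne)] at hle
    rw [hπx, hπy] at hle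
    refine lt_of_le_of_ne hle ?_
    intro hwe
    exact hne0 (hw₀inj _ hcd _ h0 hwe.symm)
  · -- backward : T₀.Adj (π u) (π v) → T.Adj u v
    intro hT₀adj
    set A₀ : Set V₀ := {c | (T₀.deleteEdges {s(π u, π v)}).Reachable (π u) c} with hA₀
    have hbridge := isAcyclic_iff_forall_adj_isBridge.mp hT₀.1.2.IsAcyclic hT₀adj
    rw [isBridge_iff] at hbridge
    have huA : u ∈ π ⁻¹' A₀ := Reachable.refl _
    have hvA : v ∉ π ⁻¹' A₀ := hbridge
    refine cut_in_mst hT huv huA hvA ?_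
    intro x y hxy hxA hyA hne'
    rcases hadj x y hxy with hp | h0xy
    · exact absurd (show y ∈ π ⁻¹' A₀ by rw [Set.mem_preimage, ← hp]; exact hxA) hyA
    · have hne0 : s(π x, π y) ≠ s(π u, π v) := by
        intro h
        exact hne' (hcorr_inj u v x y huv hxy hne h.symm).symm
      have hle := mst_cut_min hT₀ hT₀adj h0xy hxA hyA hne0
      rw [hw u v huv hne, hw x y hxy h0xy.ne]
      refine lt_of_le_of_ne hle ?_
      intro hwe
      exact hne0 (hw₀inj _ (hT₀.1.1 hT₀adj) _ h0xy hwe).symm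
end
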